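/- arXiv:2412.17399 — 3 statements merged into one kernel-verified Lean document; each statement's English description precedes it below -/
import Mathlib

section
/- Let φ ≥ 0 and let I ⊂ ℝ be a compact interval. There exist constants 0 < C_m ≤ C_M depending only on φ and I such that for all μ ∈ I and all n ∈ ℤ \ {0}: C_m(1+|n|) ≤ |Re(ζ_n^+)| ≤ |ζ_n^+| ≤ C_M(1+|n|), and C_m(1+|n|) ≤ |Re(ζ_n^−)| ≤ |ζ_n^−| ≤ C_M(1+|n|), and C_m(1+|n|) ≤ |√(φ² + 4(inμ + n²))|. -/
open Complex

/-- The exponent `ζ_n^+ = -φ/2 + (1/2)√(φ² + 4(inμ + n²))` (principal square root). -/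
noncomputable def zetaPlus (φ μ : ℝ) (n : ℤ) : ℂ :=
  -(φ/2 : ℂ) + (1/2) * ((φ^2 + 4*((n : ℂ) * μ * Complex.I + (n : ℂ)^2)) ^ ((1:ℂ)/2))

/-- The exponent `ζ_n^- = -φ/2 - (1/2)√(φ² + 4(inμ + n²))` (principal square root). -/
noncomputable def zetaMinus (φ μ : ℝ) (n : ℤ) : ℂ :=
  -(φ/2 : ℂ) - (1/2) * ((φ^2 + 4*((n : ℂ) * μ * Complex.I + (n : ℂ)^2)) ^ ((1:ℂ)/2))

lemma sqrt_lower_key (φ N : ℝ) (hφ : 0 ≤ φ) (hN : 1 ≤ N) :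
    (1+N)/(4*(φ+1)) ≤ (Real.sqrt (φ^2+4*N^2) - φ)/2 := by
  set s := Real.sqrt (φ^2+4*N^2) with hs
  have hs0 : 0 ≤ s := Real.sqrt_nonneg _
  have hs2 : s^2 = φ^2+4*N^2 := Real.sq_sqrt (by positivity)
  have hsub : s ≤ φ + 2*N := by
    rw [hs, show φ^2+4*N^2 = (φ+2*N)^2 - 4*φ*N by ring]
    calc Real.sqrt ((φ+2*N)^2 - 4*φ*N) ≤ Real.sqrt ((φ+2*N)^2) := by
          apply Real.sqrt_le_sqrt; nlinarith
      _ = φ + 2*N := Real.sqrt_sq (by positivity)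
  rw [div_le_div_iff₀ (by positivity) (by norm_num)]
  have hs2' : (s-φ)*(s+φ) = 4*N^2 := by nlinarith [hs2]
  have hsp : 2 ≤ s := by nlinarith [hs2, hs0]
  have hpos : (0:ℝ) < s + φ := by linarith
  apply le_of_mul_le_mul_right _ hpos
  have heq : (s - φ) * (4 * (φ + 1)) * (s + φ) = 4*(φ+1)*(4*N^2) := by
    rw [show (s - φ) * (4 * (φ + 1)) * (s + φ) = (4*(φ+1))*((s-φ)*(s+φ)) by ring, hs2']
  rw [heq]
  have h1 : (1+N)*2*(s+φ) ≤ (1+N)*2*(2*φ+2*N) := by nlinarith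
  have h2 : (0:ℝ) ≤ 4*N^2 - N - 1 := by nlinarith
  nlinarith [mul_nonneg hφ h2]

set_option maxHeartbeats 1000000 in
/-- Uniform two-sided bounds, of order `1 + |n|`, for the exponents `ζ_n^±`
when `μ` ranges over a compact interval. -/
theorem zeta_bounds (φ : ℝ) (hφ : 0 ≤ φ) (a b : ℝ) (hab : a ≤ b) :
    ∃ Cm CM : ℝ, 0 < Cm ∧ Cm ≤ CM ∧
      ∀ μ ∈ Set.Icc a b, ∀ n : ℤ, n ≠ 0 →
        (Cm * (1 + |(n:ℝ)|) ≤ |(zetaPlus φ μ n).re| ∧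
          |(zetaPlus φ μ n).re| ≤ ‖zetaPlus φ μ n‖ ∧
          ‖zetaPlus φ μ n‖ ≤ CM * (1 + |(n:ℝ)|)) ∧
        (Cm * (1 + |(n:ℝ)|) ≤ |(zetaMinus φ μ n).re| ∧
          |(zetaMinus φ μ n).re| ≤ ‖zetaMinus φ μ n‖ ∧
          ‖zetaMinus φ μ n‖ ≤ CM * (1 + |(n:ℝ)|)) ∧
        Cm * (1 + |(n:ℝ)|) ≤
          ‖(φ^2 + 4*((n : ℂ) * μ * Complex.I + (n : ℂ)^2)) ^ ((1:ℂ)/2)‖ := by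
  have auxre : ∀ x y : ℝ, ((x:ℂ) + (y:ℂ)*Complex.I).re = x := by intro x y; simp
  have auxim : ∀ x y : ℝ, ((x:ℂ) + (y:ℂ)*Complex.I).im = y := by intro x y; simp
  set M : ℝ := max |a| |b| with hM
  have hM0 : 0 ≤ M := le_trans (abs_nonneg a) (le_max_left _ _)
  have hsqM : (2:ℝ) ≤ Real.sqrt (φ^2+4*M+4) := by
    rw [show (2:ℝ) = Real.sqrt 4 by
      rw [show (4:ℝ) = 2^2 by norm_num, Real.sqrt_sq]; norm_num]
    apply Real.sqrt_le_sqrt; nlinarith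
  refine ⟨1/(4*(φ+1)), (φ + Real.sqrt (φ^2+4*M+4))/2, by positivity, ?_, ?_⟩
  · have h2 : 1/(4*(φ+1)) ≤ 1 := by
      rw [div_le_one (by positivity)]; nlinarith
    linarith
  intro μ hμ n hn
  set N : ℝ := |(n:ℝ)| with hNdef
  have hN : 1 ≤ N := by
    rw [hNdef, ← Int.cast_abs]
    exact_mod_cast Int.one_le_abs hn
  have hN2 : ((n:ℝ))^2 = N^2 := (_root_.sq_abs _).symm
  have hμM : |μ| ≤ M := abs_le.2 ⟨le_trans (neg_le_neg (le_max_left |a| |b|))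
      (le_trans (neg_abs_le a) hμ.1),
    le_trans hμ.2 (le_trans (le_abs_self b) (le_max_right _ _))⟩
  set w : ℂ := (φ:ℂ)^2 + 4*((n : ℂ) * μ * Complex.I + (n : ℂ)^2) with hwdef
  have hw_eq : w = ((φ^2 + 4*N^2 : ℝ) : ℂ) + ((4*(n:ℝ)*μ : ℝ):ℂ)*Complex.I := by
    rw [hwdef, ← hN2]; push_cast; ring
  have hw_re : w.re = φ^2 + 4*N^2 := by rw [hw_eq]; exact auxre _ _
  have hw_im : w.im = 4*(n:ℝ)*μ := by rw [hw_eq]; exact auxim _ _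
  have hw_re_pos : 0 < w.re := by rw [hw_re]; nlinarith
  have hw0 : w ≠ 0 := fun h => by simp [h] at hw_re_pos
  set z : ℂ := w ^ ((1:ℂ)/2) with hzdef
  have hzz : z * z = w := by
    rw [hzdef, ← Complex.cpow_add _ _ hw0]; norm_num
  have habs_z : ‖z‖ = Real.sqrt (‖w‖) := by
    rw [hzdef, show ((1:ℂ)/2) = ((1/2 : ℝ):ℂ) by norm_num, Complex.norm_cpow_real,
      ← Real.sqrt_eq_rpow]
  -- |w| bounds
  have habsw_lb : w.re ≤ ‖w‖ := Complex.re_le_norm w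
  have habsw_ub : ‖w‖ ≤ (φ^2+4*M+4) * (1+N)^2 := by
    calc ‖w‖ ≤ |w.re| + |w.im| := Complex.norm_le_abs_re_add_abs_im w
      _ = (φ^2 + 4*N^2) + |4*(n:ℝ)*μ| := by
          rw [hw_re, hw_im, _root_.abs_of_nonneg (by positivity : (0:ℝ) ≤ φ^2+4*N^2)]
      _ ≤ (φ^2 + 4*N^2) + 4*N*M := by
          have he : |4*(n:ℝ)*μ| = 4*N*|μ| := by
            rw [abs_mul, abs_mul, hNdef]; norm_num
          rw [he]
          have := mul_le_mul_of_nonneg_left hμM (by positivity : (0:ℝ) ≤ 4*N)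
          linarith
      _ ≤ (φ^2+4*M+4) * (1+N)^2 := by nlinarith
  -- lower bound for |z|
  have habs_z_lb : 1 + N ≤ ‖z‖ := by
    rw [habs_z]
    calc (1:ℝ) + N = Real.sqrt ((1+N)^2) := (Real.sqrt_sq (by linarith)).symm
      _ ≤ Real.sqrt (‖w‖) := by
          apply Real.sqrt_le_sqrt
          calc (1+N)^2 ≤ φ^2 + 4*N^2 := by nlinarith
            _ = w.re := hw_re.symm
            _ ≤ ‖w‖ := habsw_lb
  -- upper bound for |z|
  have habs_z_ub : ‖z‖ ≤ Real.sqrt (φ^2+4*M+4) * (1+N) := by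
    rw [habs_z]
    calc Real.sqrt (‖w‖) ≤ Real.sqrt ((φ^2+4*M+4) * (1+N)^2) :=
          Real.sqrt_le_sqrt habsw_ub
      _ = Real.sqrt (φ^2+4*M+4) * (1+N) := by
          rw [Real.sqrt_mul (by positivity), Real.sqrt_sq (by linarith)]
  -- lower bound for |Re z|
  have hrez_sq : z.re^2 = w.re + z.im^2 := by
    have hc := congrArg Complex.re hzz
    rw [Complex.mul_re] at hc
    nlinarith [hc]
  have hrez_lb : Real.sqrt (φ^2+4*N^2) ≤ |z.re| := by
    rw [← Real.sqrt_sq_eq_abs]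
    apply Real.sqrt_le_sqrt
    rw [hrez_sq, hw_re]; nlinarith [sq_nonneg z.im]
  -- re computations
  have hre_plus : (zetaPlus φ μ n).re = -(φ/2) + z.re/2 := by
    show (-((φ:ℂ)/2) + (1/2) * z).re = _
    rw [show -((φ:ℂ)/2) = ((-(φ/2) : ℝ) : ℂ) by push_cast; ring,
      show ((1:ℂ)/2) = ((1/2 : ℝ):ℂ) by norm_num]
    rw [Complex.add_re, Complex.ofReal_re, Complex.re_ofReal_mul]
    ring
  have hre_minus : (zetaMinus φ μ n).re = -(φ/2) - z.re/2 := by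
    show (-((φ:ℂ)/2) - (1/2) * z).re = _
    rw [show -((φ:ℂ)/2) = ((-(φ/2) : ℝ) : ℂ) by push_cast; ring,
      show ((1:ℂ)/2) = ((1/2 : ℝ):ℂ) by norm_num]
    rw [Complex.sub_re, Complex.ofReal_re, Complex.re_ofReal_mul]
    ring
  have hkey := sqrt_lower_key φ N hφ hN
  have hre_abs_lb : (Real.sqrt (φ^2+4*N^2) - φ)/2 ≤ |z.re|/2 - φ/2 := by linarith
  -- lower bounds for |Re ζ±|
  have hlb_plus : 1/(4*(φ+1)) * (1 + N) ≤ |(zetaPlus φ μ n).re| := by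
    rw [hre_plus]
    have h1 : |z.re|/2 - φ/2 ≤ |(-(φ/2) + z.re/2)| := by
      have ht := abs_sub_abs_le_abs_sub (z.re/2) (φ/2)
      have h2 : |z.re/2 - φ/2| = |(-(φ/2) + z.re/2)| := by
        congr 1; ring
      rw [h2] at ht
      have h3 : |z.re/2| = |z.re|/2 := by rw [abs_div]; norm_num
      have h4 : |φ/2| = φ/2 := _root_.abs_of_nonneg (by linarith)
      linarith
    calc 1/(4*(φ+1)) * (1 + N) = (1+N)/(4*(φ+1)) := by ring
      _ ≤ (Real.sqrt (φ^2+4*N^2) - φ)/2 := hkey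
      _ ≤ |z.re|/2 - φ/2 := hre_abs_lb
      _ ≤ _ := h1
  have hlb_minus : 1/(4*(φ+1)) * (1 + N) ≤ |(zetaMinus φ μ n).re| := by
    rw [hre_minus]
    have h1 : |z.re|/2 - φ/2 ≤ |(-(φ/2) - z.re/2)| := by
      have ht := abs_sub_abs_le_abs_sub (z.re/2) (-(φ/2))
      have h2 : |z.re/2 - -(φ/2)| = |(-(φ/2) - z.re/2)| := by
        rw [← abs_neg]; congr 1; ring
      rw [h2] at ht
      have h3 : |z.re/2| = |z.re|/2 := by rw [abs_div]; norm_num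
      have h4 : |(-(φ/2))| = φ/2 := by
        rw [abs_neg]; exact _root_.abs_of_nonneg (by linarith)
      linarith
    calc 1/(4*(φ+1)) * (1 + N) = (1+N)/(4*(φ+1)) := by ring
      _ ≤ (Real.sqrt (φ^2+4*N^2) - φ)/2 := hkey
      _ ≤ |z.re|/2 - φ/2 := hre_abs_lb
      _ ≤ _ := h1
  -- upper bounds
  have hhalf : ‖-((φ:ℂ)/2)‖ = φ/2 := by
    rw [norm_neg, norm_div, Complex.norm_real, Real.norm_eq_abs, _root_.abs_of_nonneg hφ,
      Complex.norm_two]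
  have hhalfz : ‖(1/2:ℂ) * z‖ = ‖z‖ / 2 := by
    rw [norm_mul, norm_div, norm_one, Complex.norm_two]; ring
  have hub : ∀ ζ : ℂ, ‖ζ‖ ≤ φ/2 + ‖z‖ / 2 →
      ‖ζ‖ ≤ (φ + Real.sqrt (φ^2+4*M+4))/2 * (1 + N) := by
    intro ζ hζ
    have hsq : 0 ≤ Real.sqrt (φ^2+4*M+4) := Real.sqrt_nonneg _
    calc ‖ζ‖ ≤ φ/2 + ‖z‖ / 2 := hζ
      _ ≤ φ/2 + Real.sqrt (φ^2+4*M+4) * (1+N) / 2 := by linarith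
      _ ≤ (φ + Real.sqrt (φ^2+4*M+4))/2 * (1 + N) := by nlinarith
  have habs_plus : ‖zetaPlus φ μ n‖ ≤ φ/2 + ‖z‖ / 2 := by
    have h := norm_add_le (-((φ:ℂ)/2)) ((1/2:ℂ) * z)
    rw [hhalf, hhalfz] at h
    exact h
  have habs_minus : ‖zetaMinus φ μ n‖ ≤ φ/2 + ‖z‖ / 2 := by
    have h := norm_sub_le (-((φ:ℂ)/2)) ((1/2:ℂ) * z)
    rw [hhalf, hhalfz] at h
    exact h
  refine ⟨⟨hlb_plus, Complex.abs_re_le_norm _, hub _ habs_plus⟩,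
    ⟨hlb_minus, Complex.abs_re_le_norm _, hub _ habs_minus⟩, ?_⟩
  -- third bound
  have h2 : 1/(4*(φ+1)) * (1 + N) ≤ 1 + N := by
    have hle : 1/(4*(φ+1)) ≤ 1 := by
      rw [div_le_one (by positivity)]; nlinarith
    nlinarith
  calc 1/(4*(φ+1)) * (1 + N) ≤ 1 + N := h2
    _ ≤ ‖z‖ := habs_z_lb
end

section
/- Let α ∈ (3, min(2φ−1, 2β₀+3)) with φ > 2 and β₀ > 0. Suppose F⁰ ∈ C([1,∞)), F¹ ∈ C¹([1,∞)) satisfy lim_{r→∞} r^{3+2β₀}|F⁰(r)| = 0 and lim_{r→∞} r^{2+2β₀}|F¹(r)| = 0, and w ∈ C²([1,∞)) solves (1/r^{φ+1}) d/dr[r^{φ+1} w'] + (φ−1)/r² · w = F⁰ + dF¹/dr on (1,∞) with w(1) = 0 and sup_{r>1} r^{β₀+1}|w(r)| + sup_{r>1} r^{β₀+2}|w'(r)| < ∞. Then ∫₁^∞ r^α |w'(r)|² dr + ∫₁^∞ |w(r)|²/r² · r^α dr ≤ C_α ∫₁^∞ (|F⁰(r)|² r² + |F¹(r)|²) r^α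 dr, where C_α depends only on α and φ. -/
open MeasureTheory

section ZeroModeAux

open Set Filter Real

private lemma young2' {u v : ℝ} (hu : 0 < u) (huv : u * v = 1) (a b : ℝ) :
    2*(a*b) ≤ u*a^2 + v*b^2 := by
  nlinarith [sq_nonneg (u*a - b), hu, sq_nonneg a, sq_nonneg b]

private lemma abs_mul_rpow_le' {r x y A p B q : ℝ} (hr : 0 < r)
    (hx : |x| ≤ A * r ^ p) (hy : |y| ≤ B * r ^ q) :
    |x * y| ≤ (A*B) * r ^ (p+q) := by
  have h1 : |x * y| ≤ (A * r ^ p) * (B * r ^ q) := by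
    rw [abs_mul]
    exact mul_le_mul hx hy (abs_nonneg y) (le_trans (abs_nonneg x) hx)
  calc |x * y| ≤ (A * r ^ p) * (B * r ^ q) := h1
    _ = (A*B) * r ^ (p+q) := by rw [Real.rpow_add hr]; ring

private lemma bound_trans' {x M r e s : ℝ} (hr : 1 ≤ r)
    (hx : |x| ≤ M * r ^ e) (he : e ≤ s) : |x| ≤ M * r ^ s := by
  have hr0 : (0:ℝ) < r := lt_of_lt_of_le one_pos hr
  have hre : 0 < r ^ e := Real.rpow_pos_of_pos hr0 e
  have hM : 0 ≤ M := by nlinarith [(abs_nonneg x).trans hx]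
  exact hx.trans (mul_le_mul_of_nonneg_left (Real.rpow_le_rpow_of_exponent_le hr he) hM)

private lemma exists_pow_bound' {f : ℝ → ℝ} (hf : ContinuousOn f (Set.Ici 1)) {p : ℝ}
    (h : Filter.Tendsto (fun r => r ^ p * |f r|) Filter.atTop (nhds 0)) :
    ∃ M : ℝ, 0 ≤ M ∧ ∀ r : ℝ, 1 ≤ r → |f r| ≤ M * r ^ (-p) := by
  have h1 : ∀ᶠ r : ℝ in atTop, r ^ p * |f r| ≤ 1 :=
    h.eventually (eventually_le_nhds (by norm_num : (0:ℝ) < 1))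
  obtain ⟨R₀, hR₀⟩ := h1.exists_forall_of_atTop
  set R := max R₀ 1 with hR
  have hR1 : (1:ℝ) ≤ R := le_max_right _ _
  have hcont : ContinuousOn (fun r => r ^ p * |f r|) (Set.Icc 1 R) := by
    apply ContinuousOn.mul
    · intro r hr
      exact (Real.continuousAt_rpow_const r p (Or.inl (by nlinarith [hr.1]))).continuousWithinAt
    · exact (hf.mono (fun x hx => hx.1)).abs
  obtain ⟨B, hB⟩ := (isCompact_Icc).exists_bound_of_continuousOn hcont
  set M := max B 1 with hM
  refine ⟨M, le_trans zero_le_one (le_max_right _ _), fun r hr => ?_⟩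
  have hr0 : (0:ℝ) < r := lt_of_lt_of_le one_pos hr
  have hkey : r ^ p * |f r| ≤ M := by
    rcases le_or_gt r R with hc | hc
    · have h2 := hB r ⟨hr, hc⟩
      rw [Real.norm_eq_abs, abs_of_nonneg (by positivity)] at h2
      exact h2.trans (le_max_left _ _)
    · exact (hR₀ r (le_trans (le_max_left _ _) hc.le)).trans (le_max_right B 1)
  have hrp : 0 < r ^ p := Real.rpow_pos_of_pos hr0 p
  rw [Real.rpow_neg hr0.le]
  rw [← sub_nonneg] at hkey ⊢
  have heq : M * (r ^ p)⁻¹ - |f r| = (M - r ^ p * |f r|) * (r ^ p)⁻¹ := by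
    field_simp
  rw [heq]
  positivity

private lemma integrableOn_of_rpow_bound' {f : ℝ → ℝ}
    (hm : AEStronglyMeasurable f (volume.restrict (Set.Ioi 1))) {M s : ℝ} (hs : s < -1)
    (hb : ∀ r ∈ Set.Ioi (1:ℝ), |f r| ≤ M * r ^ s) :
    IntegrableOn f (Set.Ioi 1) := by
  have hint : IntegrableOn (fun r : ℝ => M * r ^ s) (Set.Ioi 1) :=
    (integrableOn_Ioi_rpow_of_lt hs one_pos).const_mul M
  refine hint.mono' hm ?_
  rw [ae_restrict_iff' measurableSet_Ioi]
  exact Filter.Eventually.of_forall (fun r hr => by simpa using hb r hr)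

private lemma tendsto_zero_of_rpow_bound' {f : ℝ → ℝ} {M s : ℝ} (hs : s < 0)
    (hb : ∀ r : ℝ, 1 < r → |f r| ≤ M * r ^ s) :
    Filter.Tendsto f Filter.atTop (nhds 0) := by
  apply squeeze_zero_norm' (a := fun r => M * r ^ s)
  · filter_upwards [eventually_gt_atTop 1] with r hr
    simpa [Real.norm_eq_abs] using hb r hr
  · have h1 : Tendsto (fun r:ℝ => r ^ s) atTop (nhds 0) := by
      have := tendsto_rpow_neg_atTop (y := -s) (by linarith)
      simpa using this
    simpa using h1.const_mul M

private lemma pointwise_hardy' (α : ℝ) (x y : ℝ) {r : ℝ} (hr : 1 < r) (ht0 : 0 < α - 1) :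
    -(2*(r ^ α*(r⁻¹*(x*y)))) ≤ ((α-1)/2)*(r ^ α*(r⁻¹*r⁻¹*x^2)) + (2/(α-1))*(r ^ α*y^2) := by
  have hr0 : (0:ℝ) < r := lt_trans one_pos hr
  have hS2 : r ^ α = (r ^ (α/2)) * (r ^ (α/2)) := by
    rw [← Real.rpow_add hr0]; ring_nf
  have huv : ((α-1)/2) * (2/(α-1)) = 1 := by field_simp
  have yy := young2' (by positivity) huv (r ^ (α/2)*(r⁻¹*x)) (-(r ^ (α/2)*y))
  have e1 : 2*((r ^ (α/2)*(r⁻¹*x))*(-(r ^ (α/2)*y))) = -(2*(r ^ α*(r⁻¹*(x*y)))) := by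
    rw [hS2]; ring
  have e2 : (r ^ (α/2)*(r⁻¹*x))^2 = r ^ α*(r⁻¹*r⁻¹*x^2) := by rw [hS2]; ring
  have e3 : (-(r ^ (α/2)*y))^2 = r ^ α*y^2 := by rw [hS2]; ring
  rw [e1, e2, e3] at yy
  exact yy

private lemma pointwise_main' (α u v Cα : ℝ) (x y f0 f1 : ℝ) {r : ℝ} (hr : 1 < r)
    (hu0 : 0 < u) (hv0 : 0 < v) (huv : u*v = 1) (hCα : Cα = (α^2+1)/4) :
    α*(r ^ α*(r⁻¹*(x*f1))) + r ^ α*(y*f1) - r ^ α*(x*f0)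
      ≤ 2*u*((r ^ α*(r⁻¹*r⁻¹*x^2)) + r ^ α*y^2) + v*Cα*((f0^2*r^2 + f1^2)*r ^ α) := by
  have hr0 : (0:ℝ) < r := lt_trans one_pos hr
  have hrne : r ≠ 0 := ne_of_gt hr0
  have hS2 : r ^ α = (r ^ (α/2)) * (r ^ (α/2)) := by
    rw [← Real.rpow_add hr0]; ring_nf
  set S := r ^ (α/2) with hS_def
  have y1 := young2' hu0 huv (S*(r⁻¹*x)) ((α/2)*(S*f1))
  have y2 := young2' hu0 huv (S*y) ((1/2)*(S*f1))
  have y3 := young2' hu0 huv (S*(r⁻¹*x)) (-(1/2)*(S*(r*f0)))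
  have e1 : 2*((S*(r⁻¹*x))*((α/2)*(S*f1))) = α*(r ^ α*(r⁻¹*(x*f1))) := by rw [hS2]; ring
  have ea1 : (S*(r⁻¹*x))^2 = r ^ α*(r⁻¹*r⁻¹*x^2) := by rw [hS2]; ring
  have eb1 : ((α/2)*(S*f1))^2 = (α^2/4)*(f1^2*r ^ α) := by rw [hS2]; ring
  have e2 : 2*((S*y)*((1/2)*(S*f1))) = r ^ α*(y*f1) := by rw [hS2]; ring
  have ea2 : (S*y)^2 = r ^ α*y^2 := by rw [hS2]; ring
  have eb2 : ((1/2)*(S*f1))^2 = (1/4)*(f1^2*r ^ α) := by rw [hS2]; ring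
  have e3 : 2*((S*(r⁻¹*x))*(-(1/2)*(S*(r*f0)))) = -(r ^ α*(x*f0)) := by
    rw [hS2]; field_simp
  have eb3 : (-(1/2)*(S*(r*f0)))^2 = (1/4)*(f0^2*r^2*r ^ α) := by rw [hS2]; ring
  rw [e1, ea1, eb1] at y1
  rw [e2, ea2, eb2] at y2
  rw [e3, ea1, eb3] at y3
  have n1 : 0 ≤ u*(r ^ α*y^2) := by positivity
  have n2 : 0 ≤ v*(α^2*(f0^2*r^2*r ^ α)) := by positivity
  rw [hCα]
  nlinarith [y1, y2, y3, n1, n2]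

private lemma hasDerivAt_B' (α : ℝ) (w w' : ℝ → ℝ) {r : ℝ} (hr : 1 < r)
    (hw : HasDerivAt w (w' r) r) :
    HasDerivAt (fun s => s ^ α * (s⁻¹ * (w s)^2))
      ((α-1)*(r ^ α*(r⁻¹*r⁻¹*(w r)^2)) + 2*(r ^ α*(r⁻¹*(w r*w' r)))) r := by
  have hr0 : (0:ℝ) < r := lt_trans one_pos hr
  have hrne : r ≠ 0 := ne_of_gt hr0
  have h1 : HasDerivAt (fun s:ℝ => s ^ α) (α * r ^ (α-1)) r :=
    Real.hasDerivAt_rpow_const (Or.inl hrne)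
  have h2 : HasDerivAt (fun s:ℝ => s⁻¹ * (w s)^2)
      (-(r^2)⁻¹ * (w r)^2 + r⁻¹ * ((2:ℕ) * w r^1 * w' r)) r :=
    (hasDerivAt_inv hrne).mul (hw.pow 2)
  have h3 := h1.mul h2
  refine h3.congr_deriv ?_
  have hp : r ^ (α-1) = r ^ α / r := Real.rpow_sub_one hrne α
  rw [hp]
  push_cast
  field_simp
  ring

private lemma hasDerivAt_Phi' (φ α : ℝ) (F0 F1 F1' w w' w'' : ℝ → ℝ) {r : ℝ} (hr : 1 < r)
    (hw : HasDerivAt w (w' r) r) (hw' : HasDerivAt w' (w'' r) r)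
    (hF1 : HasDerivAt F1 (F1' r) r)
    (ode : w'' r + (φ + 1)/r * w' r + (φ - 1)/r^2 * w r = F0 r + F1' r)
    {c : ℝ} (hc_def : c = (φ + 1 - α) * (α - 1) / 2 - (φ - 1)) :
    HasDerivAt (fun s => s ^ α * (w s * w' s)
        + ((φ + 1 - α)/2) * (s ^ α * (s⁻¹ * (w s)^2)) - s ^ α * (w s * F1 s))
      (r ^ α*(w' r)^2 + c*(r ^ α*(r⁻¹*r⁻¹*(w r)^2)) + r ^ α*(w r*F0 r)
        - α*(r ^ α*(r⁻¹*(w r*F1 r))) - r ^ α*(w' r*F1 r)) r := by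
  have hr0 : (0:ℝ) < r := lt_trans one_pos hr
  have hrne : r ≠ 0 := ne_of_gt hr0
  have h1 : HasDerivAt (fun s:ℝ => s ^ α) (α * r ^ (α-1)) r :=
    Real.hasDerivAt_rpow_const (Or.inl hrne)
  have hA := h1.mul (hw.mul hw')
  have hB := (h1.mul ((hasDerivAt_inv hrne).mul (hw.pow 2))).const_mul ((φ + 1 - α)/2)
  have hC := h1.mul (hw.mul hF1)
  have htot := (hA.add hB).sub hC
  refine htot.congr_deriv ?_
  have hp : r ^ (α-1) = r ^ α / r := Real.rpow_sub_one hrne α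
  have hw'' : w'' r = F0 r + F1' r - (φ + 1)/r * w' r - (φ - 1)/r^2 * w r := by
    linarith [ode]
  rw [hp, hw'', hc_def]
  push_cast [Pi.mul_apply, Pi.pow_apply]
  field_simp
  ring

end ZeroModeAux

set_option maxHeartbeats 1000000 in
/-- Weighted energy estimate for the zero-mode linearized equation
`w'' + ((φ+1)/r) w' + ((φ-1)/r²) w = F⁰ + (F¹)'` on `(1,∞)`. -/
theorem zero_mode_weighted_estimate
    (φ α : ℝ) (hφ : 2 < φ) (hα1 : 3 < α) (hα2 : α < 2 * φ - 1) :
    ∃ C : ℝ, 0 < C ∧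
      ∀ β₀ : ℝ, 0 < β₀ → α < 2 * β₀ + 3 →
      ∀ F0 F1 F1' w w' w'' : ℝ → ℝ,
        ContinuousOn F0 (Set.Ici 1) →
        (∀ r ∈ Set.Ici (1:ℝ), HasDerivAt F1 (F1' r) r) →
        ContinuousOn F1' (Set.Ici 1) →
        Filter.Tendsto (fun r => r ^ (3 + 2*β₀) * |F0 r|) Filter.atTop (nhds 0) →
        Filter.Tendsto (fun r => r ^ (2 + 2*β₀) * |F1 r|) Filter.atTop (nhds 0) →
        (∀ r ∈ Set.Ici (1:ℝ), HasDerivAt w (w' r) r) →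
        (∀ r ∈ Set.Ici (1:ℝ), HasDerivAt w' (w'' r) r) →
        ContinuousOn w'' (Set.Ici 1) →
        (∀ r : ℝ, 1 < r →
          w'' r + (φ + 1)/r * w' r + (φ - 1)/r^2 * w r = F0 r + F1' r) →
        w 1 = 0 →
        (∃ K : ℝ, ∀ r : ℝ, 1 < r →
          r ^ (β₀ + 1) * |w r| + r ^ (β₀ + 2) * |w' r| ≤ K) →
        (∫ r in Set.Ioi (1:ℝ), r ^ α * (w' r)^2)
          + (∫ r in Set.Ioi (1:ℝ), (w r)^2 / r^2 * r ^ α)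
          ≤ C * ∫ r in Set.Ioi (1:ℝ), ((F0 r)^2 * r^2 + (F1 r)^2) * r ^ α := by
  classical
  have ht0 : (0:ℝ) < α - 1 := by linarith
  obtain ⟨c, hc_def⟩ : ∃ x:ℝ, x = (φ + 1 - α) * (α - 1) / 2 - (φ - 1) := ⟨_, rfl⟩
  have hc4 : 0 < (α-1)^2 + 4*c := by
    rw [hc_def]
    nlinarith [mul_pos (show (0:ℝ) < α - 3 by linarith)
      (show (0:ℝ) < 2*φ - 1 - α by linarith)]
  obtain ⟨h, hh_def⟩ : ∃ x:ℝ, x = 4 / (α-1)^2 := ⟨_, rfl⟩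
  have hh0 : 0 < h := by rw [hh_def]; positivity
  obtain ⟨δ, hδ_def⟩ : ∃ x:ℝ, x = 1 + min c 0 * h := ⟨_, rfl⟩
  have hδ0 : 0 < δ := by
    rcases le_or_gt 0 c with hc | hc
    · rw [hδ_def, min_eq_right hc]; norm_num
    · rw [hδ_def, min_eq_left hc.le, hh_def]
      have e : 1 + c * (4 / (α-1)^2) = ((α-1)^2 + 4*c) / (α-1)^2 := by
        field_simp
      rw [e]; positivity
  obtain ⟨u, hu_def⟩ : ∃ x:ℝ, x = δ / (4*(1+h)) := ⟨_, rfl⟩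
  have hu0 : 0 < u := by rw [hu_def]; positivity
  obtain ⟨v, hv_def⟩ : ∃ x:ℝ, x = (4*(1+h)) / δ := ⟨_, rfl⟩
  have hv0 : 0 < v := by rw [hv_def]; positivity
  have huv : u * v = 1 := by rw [hu_def, hv_def]; field_simp
  obtain ⟨Cα, hCα_def⟩ : ∃ x:ℝ, x = (α^2+1)/4 := ⟨_, rfl⟩
  have hCα0 : 0 < Cα := by rw [hCα_def]; positivity
  obtain ⟨C, hC_def⟩ : ∃ x:ℝ, x = 2*(1+h)*v*Cα/δ := ⟨_, rfl⟩
  have hC0 : 0 < C := by rw [hC_def]; positivity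
  have numeric : ∀ I J2 G : ℝ, 0 ≤ I → 0 ≤ J2 → 0 ≤ G →
      (α-1)*J2 ≤ ((α-1)/2)*J2 + (2/(α-1))*I →
      I + c*J2 ≤ 2*u*(J2 + I) + v*Cα*G →
      I + J2 ≤ C * G := by
    intro I J2 G hI0 hJ0 hG0 hhardy hmain
    have step1 : J2 ≤ h * I := by
      have h2 : ((α-1)/2)*J2 ≤ (2/(α-1))*I := by linarith
      have h3 := mul_le_mul_of_nonneg_left h2 (by positivity : (0:ℝ) ≤ 2/(α-1))
      calc J2 = (2/(α-1)) * (((α-1)/2)*J2) := by field_simp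
        _ ≤ (2/(α-1)) * ((2/(α-1))*I) := h3
        _ = h * I := by rw [hh_def]; field_simp; ring
    have step2 : δ * I ≤ I + c*J2 := by
      rcases le_or_gt 0 c with hc | hc
      · rw [hδ_def, min_eq_right hc]
        nlinarith [mul_nonneg hc hJ0]
      · rw [hδ_def, min_eq_left hc.le]
        have h4 : c*(h*I) ≤ c*J2 := mul_le_mul_of_nonpos_left step1 hc.le
        nlinarith [h4]
    have h2u : 2*u*(1+h) = δ/2 := by rw [hu_def]; field_simp; ring
    have l1 : δ*(I+J2) ≤ δ*((1+h)*I) :=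
      mul_le_mul_of_nonneg_left (by linarith [step1]) hδ0.le
    have l2 : δ*((1+h)*I) ≤ (1+h)*(I+c*J2) := by
      have := mul_le_mul_of_nonneg_left step2 (by positivity : (0:ℝ) ≤ 1+h)
      linarith [this]
    have l3 : (1+h)*(I+c*J2) ≤ (1+h)*(2*u*(J2+I) + v*Cα*G) :=
      mul_le_mul_of_nonneg_left hmain (by positivity)
    have l4 : (1+h)*(2*u*(J2+I) + v*Cα*G) = (δ/2)*(J2+I) + (1+h)*(v*Cα*G) := by
      linear_combination (J2+I) * h2u
    have l5 : (δ/2)*(I+J2) ≤ (1+h)*(v*Cα*G) := by linarith [l1, l2, l3, l4]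
    have h6 := mul_le_mul_of_nonneg_left l5 (by positivity : (0:ℝ) ≤ 2/δ)
    calc I + J2 = (2/δ) * ((δ/2)*(I+J2)) := by field_simp
      _ ≤ (2/δ) * ((1+h)*(v*Cα*G)) := h6
      _ = C * G := by rw [hC_def]; field_simp
  refine ⟨C, hC0, ?_⟩
  intro β₀ hβ₀ hαβ F0 F1 F1' w w' w'' hF0c hF1d hF1'c hF0lim hF1lim hwd hw'd hw''c ode hw1 hKb
  -- continuity facts
  have cw : ContinuousOn w (Set.Ici 1) :=
    fun r hr => (hwd r hr).continuousAt.continuousWithinAt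
  have cw' : ContinuousOn w' (Set.Ici 1) :=
    fun r hr => (hw'd r hr).continuousAt.continuousWithinAt
  have cF1 : ContinuousOn F1 (Set.Ici 1) :=
    fun r hr => (hF1d r hr).continuousAt.continuousWithinAt
  have crpow : ContinuousOn (fun s:ℝ => s ^ α) (Set.Ici 1) := fun x hx =>
    (Real.continuousAt_rpow_const x α
      (Or.inl (ne_of_gt (lt_of_lt_of_le one_pos hx)))).continuousWithinAt
  have cinv : ContinuousOn (fun s:ℝ => s⁻¹) (Set.Ici 1) := fun x hx =>
    (continuousAt_inv₀ (ne_of_gt (lt_of_lt_of_le one_pos hx))).continuousWithinAt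
  have meas : ∀ f : ℝ → ℝ, ContinuousOn f (Set.Ici 1) →
      AEStronglyMeasurable f (volume.restrict (Set.Ioi 1)) := fun f hf =>
    (hf.mono Set.Ioi_subset_Ici_self).aestronglyMeasurable measurableSet_Ioi
  -- decay bounds
  obtain ⟨K₀, hK₀⟩ := hKb
  obtain ⟨K, hKdef⟩ : ∃ x:ℝ, x = max K₀ 0 := ⟨_, rfl⟩
  have hK0 : 0 ≤ K := by rw [hKdef]; exact le_max_right _ _
  have hwb : ∀ r : ℝ, 1 < r → |w r| ≤ K * r ^ (-(β₀+1)) := by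
    intro r hr
    have hr0 : (0:ℝ) < r := lt_trans one_pos hr
    have h1 := hK₀ r hr
    have hp1 : 0 < r ^ (β₀+1) := Real.rpow_pos_of_pos hr0 _
    have hp2 : 0 ≤ r ^ (β₀+2) * |w' r| :=
      mul_nonneg (Real.rpow_pos_of_pos hr0 _).le (abs_nonneg _)
    have h2 : r ^ (β₀+1) * |w r| ≤ K := by
      rw [hKdef]; have := le_max_left K₀ (0:ℝ); linarith
    calc |w r| = (r ^ (β₀+1) * |w r|) / r ^ (β₀+1) := by field_simp
      _ ≤ K / r ^ (β₀+1) := by gcongr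
      _ = K * r ^ (-(β₀+1)) := by rw [Real.rpow_neg hr0.le]; ring
  have hw'b : ∀ r : ℝ, 1 < r → |w' r| ≤ K * r ^ (-(β₀+2)) := by
    intro r hr
    have hr0 : (0:ℝ) < r := lt_trans one_pos hr
    have h1 := hK₀ r hr
    have hp1 : 0 < r ^ (β₀+2) := Real.rpow_pos_of_pos hr0 _
    have hp2 : 0 ≤ r ^ (β₀+1) * |w r| :=
      mul_nonneg (Real.rpow_pos_of_pos hr0 _).le (abs_nonneg _)
    have h2 : r ^ (β₀+2) * |w' r| ≤ K := by
      rw [hKdef]; have := le_max_left K₀ (0:ℝ); linarith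
    calc |w' r| = (r ^ (β₀+2) * |w' r|) / r ^ (β₀+2) := by field_simp
      _ ≤ K / r ^ (β₀+2) := by gcongr
      _ = K * r ^ (-(β₀+2)) := by rw [Real.rpow_neg hr0.le]; ring
  obtain ⟨M0, hM00, hM0b⟩ := exists_pow_bound' hF0c hF0lim
  obtain ⟨M1, hM10, hM1b⟩ := exists_pow_bound' cF1 hF1lim
  have hs₀ : α - 2*β₀ - 4 < -1 := by linarith
  -- integrability of all the pieces
  have hfI : IntegrableOn (fun r : ℝ => r ^ α * (w' r)^2) (Set.Ioi 1) := by
    refine integrableOn_of_rpow_bound' (M := 1*(K*K)) (meas _ (crpow.mul (cw'.pow 2))) hs₀ ?_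
    intro r hr
    have hr1 : (1:ℝ) < r := hr
    have hr0 : (0:ℝ) < r := lt_trans one_pos hr1
    have b1 : |r ^ α| ≤ 1 * r ^ α := by
      rw [one_mul, abs_of_pos (Real.rpow_pos_of_pos hr0 α)]
    have bb : |(w' r)^2| ≤ (K*K) * r ^ (-(β₀+2) + -(β₀+2)) := by
      rw [sq]; exact abs_mul_rpow_le' hr0 (hw'b r hr1) (hw'b r hr1)
    exact bound_trans' hr1.le (abs_mul_rpow_le' hr0 b1 bb) (by linarith)
  have hfJ : IntegrableOn (fun r : ℝ => r ^ α * (r⁻¹*r⁻¹*(w r)^2)) (Set.Ioi 1) := by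
    refine integrableOn_of_rpow_bound' (M := 1*((1*1)*(K*K)))
      (meas _ (crpow.mul ((cinv.mul cinv).mul (cw.pow 2)))) hs₀ ?_
    intro r hr
    have hr1 : (1:ℝ) < r := hr
    have hr0 : (0:ℝ) < r := lt_trans one_pos hr1
    have b1 : |r ^ α| ≤ 1 * r ^ α := by
      rw [one_mul, abs_of_pos (Real.rpow_pos_of_pos hr0 α)]
    have binv : |r⁻¹| ≤ 1 * r ^ (-1:ℝ) := by
      rw [one_mul, Real.rpow_neg_one, abs_of_pos (inv_pos.mpr hr0)]
    have bb : |(w r)^2| ≤ (K*K) * r ^ (-(β₀+1) + -(β₀+1)) := by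
      rw [sq]; exact abs_mul_rpow_le' hr0 (hwb r hr1) (hwb r hr1)
    exact bound_trans' hr1.le (abs_mul_rpow_le' hr0 b1
      (abs_mul_rpow_le' hr0 (abs_mul_rpow_le' hr0 binv binv) bb)) (by linarith)
  have hfP0 : IntegrableOn (fun r : ℝ => r ^ α * (r⁻¹*(w r*w' r))) (Set.Ioi 1) := by
    refine integrableOn_of_rpow_bound' (M := 1*(1*(K*K)))
      (meas _ (crpow.mul (cinv.mul (cw.mul cw')))) hs₀ ?_
    intro r hr
    have hr1 : (1:ℝ) < r := hr
    have hr0 : (0:ℝ) < r := lt_trans one_pos hr1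
    have b1 : |r ^ α| ≤ 1 * r ^ α := by
      rw [one_mul, abs_of_pos (Real.rpow_pos_of_pos hr0 α)]
    have binv : |r⁻¹| ≤ 1 * r ^ (-1:ℝ) := by
      rw [one_mul, Real.rpow_neg_one, abs_of_pos (inv_pos.mpr hr0)]
    exact bound_trans' hr1.le (abs_mul_rpow_le' hr0 b1
      (abs_mul_rpow_le' hr0 binv (abs_mul_rpow_le' hr0 (hwb r hr1) (hw'b r hr1)))) (by linarith)
  have hfP1 : IntegrableOn (fun r : ℝ => r ^ α * (r⁻¹*(w r*F1 r))) (Set.Ioi 1) := by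
    refine integrableOn_of_rpow_bound' (M := 1*(1*(K*M1)))
      (meas _ (crpow.mul (cinv.mul (cw.mul cF1)))) hs₀ ?_
    intro r hr
    have hr1 : (1:ℝ) < r := hr
    have hr0 : (0:ℝ) < r := lt_trans one_pos hr1
    have b1 : |r ^ α| ≤ 1 * r ^ α := by
      rw [one_mul, abs_of_pos (Real.rpow_pos_of_pos hr0 α)]
    have binv : |r⁻¹| ≤ 1 * r ^ (-1:ℝ) := by
      rw [one_mul, Real.rpow_neg_one, abs_of_pos (inv_pos.mpr hr0)]
    exact bound_trans' hr1.le (abs_mul_rpow_le' hr0 b1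
      (abs_mul_rpow_le' hr0 binv (abs_mul_rpow_le' hr0 (hwb r hr1) (hM1b r hr1.le)))) (by linarith)
  have hfP2 : IntegrableOn (fun r : ℝ => r ^ α * (w' r*F1 r)) (Set.Ioi 1) := by
    refine integrableOn_of_rpow_bound' (M := 1*(K*M1))
      (meas _ (crpow.mul (cw'.mul cF1))) hs₀ ?_
    intro r hr
    have hr1 : (1:ℝ) < r := hr
    have hr0 : (0:ℝ) < r := lt_trans one_pos hr1
    have b1 : |r ^ α| ≤ 1 * r ^ α := by
      rw [one_mul, abs_of_pos (Real.rpow_pos_of_pos hr0 α)]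
    exact bound_trans' hr1.le (abs_mul_rpow_le' hr0 b1
      (abs_mul_rpow_le' hr0 (hw'b r hr1) (hM1b r hr1.le))) (by linarith)
  have hfP3 : IntegrableOn (fun r : ℝ => r ^ α * (w r*F0 r)) (Set.Ioi 1) := by
    refine integrableOn_of_rpow_bound' (M := 1*(K*M0))
      (meas _ (crpow.mul (cw.mul hF0c))) hs₀ ?_
    intro r hr
    have hr1 : (1:ℝ) < r := hr
    have hr0 : (0:ℝ) < r := lt_trans one_pos hr1
    have b1 : |r ^ α| ≤ 1 * r ^ α := by
      rw [one_mul, abs_of_pos (Real.rpow_pos_of_pos hr0 α)]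
    exact bound_trans' hr1.le (abs_mul_rpow_le' hr0 b1
      (abs_mul_rpow_le' hr0 (hwb r hr1) (hM0b r hr1.le))) (by linarith)
  have hfG : IntegrableOn (fun r : ℝ => ((F0 r)^2*r^2 + (F1 r)^2)*r ^ α) (Set.Ioi 1) := by
    refine integrableOn_of_rpow_bound' (M := M0*M0 + M1*M1)
      (meas _ ((((hF0c.pow 2).mul (continuous_pow 2).continuousOn).add (cF1.pow 2)).mul crpow))
      hs₀ ?_
    intro r hr
    have hr1 : (1:ℝ) < r := hr
    have hr0 : (0:ℝ) < r := lt_trans one_pos hr1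
    have b1 : |r ^ α| ≤ 1 * r ^ α := by
      rw [one_mul, abs_of_pos (Real.rpow_pos_of_pos hr0 α)]
    have br2 : |r^2| ≤ 1 * r ^ (2:ℝ) := by
      rw [one_mul, show ((2:ℝ)) = ((2:ℕ):ℝ) by norm_num, Real.rpow_natCast,
        abs_of_pos (by positivity)]
    have bf0 : |(F0 r)^2| ≤ (M0*M0) * r ^ (-(3+2*β₀) + -(3+2*β₀)) := by
      rw [sq]; exact abs_mul_rpow_le' hr0 (hM0b r hr1.le) (hM0b r hr1.le)
    have bf1 : |(F1 r)^2| ≤ (M1*M1) * r ^ (-(2+2*β₀) + -(2+2*β₀)) := by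
      rw [sq]; exact abs_mul_rpow_le' hr0 (hM1b r hr1.le) (hM1b r hr1.le)
    have c1 := bound_trans' hr1.le
      (abs_mul_rpow_le' hr0 (abs_mul_rpow_le' hr0 bf0 br2) b1)
      (show (-(3+2*β₀) + -(3+2*β₀) + 2) + α ≤ α - 2*β₀ - 4 by linarith)
    have c2 := bound_trans' hr1.le
      (abs_mul_rpow_le' hr0 bf1 b1)
      (show (-(2+2*β₀) + -(2+2*β₀)) + α ≤ α - 2*β₀ - 4 by linarith)
    have hsplit : ((F0 r)^2*r^2 + (F1 r)^2)*r ^ α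
        = (F0 r)^2*r^2*r ^ α + (F1 r)^2*r ^ α := by ring
    rw [hsplit]
    calc |(F0 r)^2*r^2*r ^ α + (F1 r)^2*r ^ α|
        ≤ |(F0 r)^2*r^2*r ^ α| + |(F1 r)^2*r ^ α| := abs_add_le _ _
      _ ≤ (M0*M0 + M1*M1) * r ^ (α - 2*β₀ - 4) := by
          rw [add_mul]; exact add_le_add (by linarith [c1]) (by linarith [c2])
  -- name the integrals
  set I := ∫ r in Set.Ioi (1:ℝ), r ^ α * (w' r)^2 with hI_def
  set J2 := ∫ r in Set.Ioi (1:ℝ), r ^ α * (r⁻¹*r⁻¹*(w r)^2) with hJ2_def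
  set G := ∫ r in Set.Ioi (1:ℝ), ((F0 r)^2*r^2 + (F1 r)^2)*r ^ α with hG_def
  set P0 := ∫ r in Set.Ioi (1:ℝ), r ^ α * (r⁻¹*(w r*w' r)) with hP0_def
  set P1 := ∫ r in Set.Ioi (1:ℝ), r ^ α * (r⁻¹*(w r*F1 r)) with hP1_def
  set P2 := ∫ r in Set.Ioi (1:ℝ), r ^ α * (w' r*F1 r) with hP2_def
  set P3 := ∫ r in Set.Ioi (1:ℝ), r ^ α * (w r*F0 r) with hP3_def
  -- FTC for the Hardy test function B(r) = r^α (r⁻¹ w²)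
  have hBder : ∀ x ∈ Set.Ioi (1:ℝ), HasDerivAt (fun s => s ^ α * (s⁻¹ * (w s)^2))
      ((α-1)*(x ^ α*(x⁻¹*x⁻¹*(w x)^2)) + 2*(x ^ α*(x⁻¹*(w x*w' x)))) x :=
    fun x hx => hasDerivAt_B' α w w' hx (hwd x (Set.mem_Ici.mpr (le_of_lt hx)))
  have hEBint : IntegrableOn (fun x : ℝ =>
      (α-1)*(x ^ α*(x⁻¹*x⁻¹*(w x)^2)) + 2*(x ^ α*(x⁻¹*(w x*w' x)))) (Set.Ioi 1) :=
    (hfJ.const_mul (α-1)).add (hfP0.const_mul 2)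
  have hBtend : Filter.Tendsto (fun x:ℝ => x ^ α * (x⁻¹ * (w x)^2))
      Filter.atTop (nhds 0) := by
    refine tendsto_zero_of_rpow_bound' (M := 1*(1*(K*K))) (s := α-2*β₀-3) (by linarith) ?_
    intro r hr
    have hr0 : (0:ℝ) < r := lt_trans one_pos hr
    have b1 : |r ^ α| ≤ 1 * r ^ α := by
      rw [one_mul, abs_of_pos (Real.rpow_pos_of_pos hr0 α)]
    have binv : |r⁻¹| ≤ 1 * r ^ (-1:ℝ) := by
      rw [one_mul, Real.rpow_neg_one, abs_of_pos (inv_pos.mpr hr0)]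
    have bb : |(w r)^2| ≤ (K*K) * r ^ (-(β₀+1) + -(β₀+1)) := by
      rw [sq]; exact abs_mul_rpow_le' hr0 (hwb r hr) (hwb r hr)
    exact bound_trans' hr.le (abs_mul_rpow_le' hr0 b1
      (abs_mul_rpow_le' hr0 binv bb)) (by linarith)
  have hBcont : ContinuousWithinAt (fun s:ℝ => s ^ α * (s⁻¹ * (w s)^2)) (Set.Ici 1) 1 :=
    (crpow.mul (cinv.mul (cw.pow 2))).continuousWithinAt Set.self_mem_Ici
  have hFTCB := integral_Ioi_of_hasDerivAt_of_tendsto hBcont hBder hEBint hBtend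
  have hFTCB' : (∫ x in Set.Ioi (1:ℝ),
      ((α-1)*(x ^ α*(x⁻¹*x⁻¹*(w x)^2)) + 2*(x ^ α*(x⁻¹*(w x*w' x))))) = 0 := by
    rw [hFTCB]; simp [hw1]
  have hBsplit : (∫ x in Set.Ioi (1:ℝ),
      ((α-1)*(x ^ α*(x⁻¹*x⁻¹*(w x)^2)) + 2*(x ^ α*(x⁻¹*(w x*w' x)))))
      = (α-1)*J2 + 2*P0 := by
    rw [MeasureTheory.integral_add (hfJ.const_mul (α-1)) (hfP0.const_mul 2),
      MeasureTheory.integral_const_mul, MeasureTheory.integral_const_mul,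
      hJ2_def, hP0_def]
  have hHid : (α-1)*J2 + 2*P0 = 0 := by rw [← hBsplit]; exact hFTCB'
  -- Hardy inequality
  have hHineq : (α-1)*J2 ≤ ((α-1)/2)*J2 + (2/(α-1))*I := by
    have hneg : (α-1)*J2 = ∫ x in Set.Ioi (1:ℝ), (-(2*(x ^ α*(x⁻¹*(w x*w' x))))) := by
      rw [MeasureTheory.integral_neg, MeasureTheory.integral_const_mul, ← hP0_def]
      linarith [hHid]
    have hfN : IntegrableOn (fun x : ℝ => -(2*(x ^ α*(x⁻¹*(w x*w' x))))) (Set.Ioi 1) :=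
      ((hfP0.const_mul 2).neg)
    have hfH : IntegrableOn (fun r : ℝ =>
        ((α-1)/2)*(r ^ α*(r⁻¹*r⁻¹*(w r)^2)) + (2/(α-1))*(r ^ α*(w' r)^2)) (Set.Ioi 1) :=
      (hfJ.const_mul ((α-1)/2)).add (hfI.const_mul (2/(α-1)))
    have hmono := setIntegral_mono_on hfN hfH measurableSet_Ioi
      (fun r hr => pointwise_hardy' α (w r) (w' r) hr ht0)
    rw [hneg]
    refine hmono.trans (le_of_eq ?_)
    rw [MeasureTheory.integral_add (hfJ.const_mul ((α-1)/2)) (hfI.const_mul (2/(α-1))),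
      MeasureTheory.integral_const_mul, MeasureTheory.integral_const_mul, hJ2_def, hI_def]
  -- FTC for the main test function Φ
  have hΦder : ∀ x ∈ Set.Ioi (1:ℝ), HasDerivAt (fun s => s ^ α * (w s * w' s)
      + ((φ + 1 - α)/2) * (s ^ α * (s⁻¹ * (w s)^2)) - s ^ α * (w s * F1 s))
      (x ^ α*(w' x)^2 + c*(x ^ α*(x⁻¹*x⁻¹*(w x)^2)) + x ^ α*(w x*F0 x)
        - α*(x ^ α*(x⁻¹*(w x*F1 x))) - x ^ α*(w' x*F1 x)) x :=
    fun x hx => hasDerivAt_Phi' φ α F0 F1 F1' w w' w'' hx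
      (hwd x (Set.mem_Ici.mpr (le_of_lt hx))) (hw'd x (Set.mem_Ici.mpr (le_of_lt hx)))
      (hF1d x (Set.mem_Ici.mpr (le_of_lt hx))) (ode x hx) hc_def
  have hEint : IntegrableOn (fun x : ℝ =>
      x ^ α*(w' x)^2 + c*(x ^ α*(x⁻¹*x⁻¹*(w x)^2)) + x ^ α*(w x*F0 x)
        - α*(x ^ α*(x⁻¹*(w x*F1 x))) - x ^ α*(w' x*F1 x)) (Set.Ioi 1) :=
    (((hfI.add (hfJ.const_mul c)).add hfP3).sub (hfP1.const_mul α)).sub hfP2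
  have hΦcont : ContinuousWithinAt (fun s:ℝ => s ^ α * (w s * w' s)
      + ((φ + 1 - α)/2) * (s ^ α * (s⁻¹ * (w s)^2)) - s ^ α * (w s * F1 s))
      (Set.Ici 1) 1 :=
    (((crpow.mul (cw.mul cw')).add
      (continuousOn_const.mul (crpow.mul (cinv.mul (cw.pow 2))))).sub
      (crpow.mul (cw.mul cF1))).continuousWithinAt Set.self_mem_Ici
  have hΦtend : Filter.Tendsto (fun s:ℝ => s ^ α * (w s * w' s)
      + ((φ + 1 - α)/2) * (s ^ α * (s⁻¹ * (w s)^2)) - s ^ α * (w s * F1 s))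
      Filter.atTop (nhds 0) := by
    refine tendsto_zero_of_rpow_bound'
      (M := 1*(K*K) + (abs ((φ + 1 - α)/2))*(1*(1*(K*K))) + 1*(K*M1))
      (s := α-2*β₀-3) (by linarith) ?_
    intro r hr
    have hr0 : (0:ℝ) < r := lt_trans one_pos hr
    have b1 : |r ^ α| ≤ 1 * r ^ α := by
      rw [one_mul, abs_of_pos (Real.rpow_pos_of_pos hr0 α)]
    have binv : |r⁻¹| ≤ 1 * r ^ (-1:ℝ) := by
      rw [one_mul, Real.rpow_neg_one, abs_of_pos (inv_pos.mpr hr0)]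
    have habsc : |(φ + 1 - α)/2| ≤ (abs ((φ + 1 - α)/2)) * r ^ (0:ℝ) := by
      rw [Real.rpow_zero, mul_one]
    have t1 : |r ^ α * (w r * w' r)| ≤ (1*(K*K)) * r ^ (α-2*β₀-3) :=
      bound_trans' hr.le
        (abs_mul_rpow_le' hr0 b1 (abs_mul_rpow_le' hr0 (hwb r hr) (hw'b r hr)))
        (by linarith)
    have t2 : |((φ + 1 - α)/2) * (r ^ α * (r⁻¹ * (w r)^2))|
        ≤ ((abs ((φ + 1 - α)/2))*(1*(1*(K*K)))) * r ^ (α-2*β₀-3) := by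
      have bb : |(w r)^2| ≤ (K*K) * r ^ (-(β₀+1) + -(β₀+1)) := by
        rw [sq]; exact abs_mul_rpow_le' hr0 (hwb r hr) (hwb r hr)
      exact bound_trans' hr.le
        (abs_mul_rpow_le' hr0 habsc (abs_mul_rpow_le' hr0 b1 (abs_mul_rpow_le' hr0 binv bb)))
        (by linarith)
    have t3 : |r ^ α * (w r * F1 r)| ≤ (1*(K*M1)) * r ^ (α-2*β₀-3) :=
      bound_trans' hr.le
        (abs_mul_rpow_le' hr0 b1 (abs_mul_rpow_le' hr0 (hwb r hr) (hM1b r hr.le)))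
        (by linarith)
    have htri : |r ^ α * (w r * w' r) + ((φ + 1 - α)/2) * (r ^ α * (r⁻¹ * (w r)^2))
        - r ^ α * (w r * F1 r)|
        ≤ |r ^ α * (w r * w' r)| + |((φ + 1 - α)/2) * (r ^ α * (r⁻¹ * (w r)^2))|
          + |r ^ α * (w r * F1 r)| := by
      rw [sub_eq_add_neg]
      refine (abs_add_le _ _).trans ?_
      rw [abs_neg]
      exact add_le_add_left (abs_add_le _ _) _
    calc |r ^ α * (w r * w' r) + ((φ + 1 - α)/2) * (r ^ α * (r⁻¹ * (w r)^2))
        - r ^ α * (w r * F1 r)|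
        ≤ |r ^ α * (w r * w' r)| + |((φ + 1 - α)/2) * (r ^ α * (r⁻¹ * (w r)^2))|
          + |r ^ α * (w r * F1 r)| := htri
      _ ≤ (1*(K*K) + (abs ((φ + 1 - α)/2))*(1*(1*(K*K))) + 1*(K*M1)) * r ^ (α-2*β₀-3) := by
          rw [add_mul, add_mul]; exact add_le_add (add_le_add t1 t2) t3
  have hFTCΦ := integral_Ioi_of_hasDerivAt_of_tendsto hΦcont hΦder hEint hΦtend
  have hFTCΦ' : (∫ x in Set.Ioi (1:ℝ),
      (x ^ α*(w' x)^2 + c*(x ^ α*(x⁻¹*x⁻¹*(w x)^2)) + x ^ α*(w x*F0 x)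
        - α*(x ^ α*(x⁻¹*(w x*F1 x))) - x ^ α*(w' x*F1 x))) = 0 := by
    rw [hFTCΦ]; simp [hw1]
  have hΦsplit : (∫ x in Set.Ioi (1:ℝ),
      (x ^ α*(w' x)^2 + c*(x ^ α*(x⁻¹*x⁻¹*(w x)^2)) + x ^ α*(w x*F0 x)
        - α*(x ^ α*(x⁻¹*(w x*F1 x))) - x ^ α*(w' x*F1 x)))
      = I + c*J2 + P3 - α*P1 - P2 := by
    have hA1 : IntegrableOn (fun x : ℝ =>
        x ^ α*(w' x)^2 + c*(x ^ α*(x⁻¹*x⁻¹*(w x)^2))) (Set.Ioi 1) :=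
      hfI.add (hfJ.const_mul c)
    have hA2 : IntegrableOn (fun x : ℝ =>
        x ^ α*(w' x)^2 + c*(x ^ α*(x⁻¹*x⁻¹*(w x)^2)) + x ^ α*(w x*F0 x)) (Set.Ioi 1) :=
      hA1.add hfP3
    have hA3 : IntegrableOn (fun x : ℝ =>
        x ^ α*(w' x)^2 + c*(x ^ α*(x⁻¹*x⁻¹*(w x)^2)) + x ^ α*(w x*F0 x)
          - α*(x ^ α*(x⁻¹*(w x*F1 x)))) (Set.Ioi 1) :=
      hA2.sub (hfP1.const_mul α)
    rw [MeasureTheory.integral_sub hA3 hfP2,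
      MeasureTheory.integral_sub hA2 (hfP1.const_mul α),
      MeasureTheory.integral_add hA1 hfP3,
      MeasureTheory.integral_add hfI (hfJ.const_mul c),
      MeasureTheory.integral_const_mul, MeasureTheory.integral_const_mul,
      hI_def, hJ2_def, hP1_def, hP2_def, hP3_def]
  have hQ : I + c*J2 = α*P1 + P2 - P3 := by
    have h0 : I + c*J2 + P3 - α*P1 - P2 = 0 := by rw [← hΦsplit]; exact hFTCΦ'
    linarith
  -- main inequality via pointwise Young
  have hXsplit : (∫ r in Set.Ioi (1:ℝ),
      (α*(r ^ α*(r⁻¹*(w r*F1 r))) + r ^ α*(w' r*F1 r) - r ^ α*(w r*F0 r)))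
      = α*P1 + P2 - P3 := by
    have hX1 : IntegrableOn (fun r : ℝ =>
        α*(r ^ α*(r⁻¹*(w r*F1 r))) + r ^ α*(w' r*F1 r)) (Set.Ioi 1) :=
      (hfP1.const_mul α).add hfP2
    rw [MeasureTheory.integral_sub hX1 hfP3,
      MeasureTheory.integral_add (hfP1.const_mul α) hfP2,
      MeasureTheory.integral_const_mul, hP1_def, hP2_def, hP3_def]
  have hRsplit : (∫ r in Set.Ioi (1:ℝ),
      (2*u*((r ^ α*(r⁻¹*r⁻¹*(w r)^2)) + r ^ α*(w' r)^2)
        + v*Cα*(((F0 r)^2*r^2 + (F1 r)^2)*r ^ α)))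
      = 2*u*(J2 + I) + v*Cα*G := by
    have hR1 : IntegrableOn (fun r : ℝ =>
        r ^ α*(r⁻¹*r⁻¹*(w r)^2) + r ^ α*(w' r)^2) (Set.Ioi 1) := hfJ.add hfI
    rw [MeasureTheory.integral_add (hR1.const_mul (2*u)) (hfG.const_mul (v*Cα)),
      MeasureTheory.integral_const_mul, MeasureTheory.integral_const_mul,
      MeasureTheory.integral_add hfJ hfI, hJ2_def, hI_def, hG_def]
  have hfX : IntegrableOn (fun r : ℝ =>
      α*(r ^ α*(r⁻¹*(w r*F1 r))) + r ^ α*(w' r*F1 r) - r ^ α*(w r*F0 r)) (Set.Ioi 1) :=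
    ((hfP1.const_mul α).add hfP2).sub hfP3
  have hfR : IntegrableOn (fun r : ℝ =>
      2*u*((r ^ α*(r⁻¹*r⁻¹*(w r)^2)) + r ^ α*(w' r)^2)
        + v*Cα*(((F0 r)^2*r^2 + (F1 r)^2)*r ^ α)) (Set.Ioi 1) :=
    ((hfJ.add hfI).const_mul (2*u)).add (hfG.const_mul (v*Cα))
  have hmono2 := setIntegral_mono_on hfX hfR measurableSet_Ioi
    (fun r hr => pointwise_main' α u v Cα (w r) (w' r) (F0 r) (F1 r) hr hu0 hv0 huv hCα_def)
  have hmainI : I + c*J2 ≤ 2*u*(J2+I) + v*Cα*G := by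
    rw [hQ, ← hXsplit, ← hRsplit]; exact hmono2
  -- nonnegativity
  have hI0 : 0 ≤ I := by
    rw [hI_def]
    refine setIntegral_nonneg measurableSet_Ioi (fun r hr => ?_)
    have hr0 : (0:ℝ) ≤ r := le_of_lt (lt_trans one_pos hr)
    exact mul_nonneg (Real.rpow_nonneg hr0 α) (sq_nonneg _)
  have hJ20 : 0 ≤ J2 := by
    rw [hJ2_def]
    refine setIntegral_nonneg measurableSet_Ioi (fun r hr => ?_)
    have hr0 : (0:ℝ) ≤ r := le_of_lt (lt_trans one_pos hr)
    exact mul_nonneg (Real.rpow_nonneg hr0 α)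
      (mul_nonneg (mul_nonneg (inv_nonneg.mpr hr0) (inv_nonneg.mpr hr0)) (sq_nonneg _))
  have hG0 : 0 ≤ G := by
    rw [hG_def]
    refine setIntegral_nonneg measurableSet_Ioi (fun r hr => ?_)
    have hr0 : (0:ℝ) ≤ r := le_of_lt (lt_trans one_pos hr)
    exact mul_nonneg (add_nonneg (mul_nonneg (sq_nonneg _) (sq_nonneg _)) (sq_nonneg _))
      (Real.rpow_nonneg hr0 α)
  -- rewrite the statement's J integral
  have hJeq : (∫ r in Set.Ioi (1:ℝ), (w r)^2 / r^2 * r ^ α) = J2 := by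
    rw [hJ2_def]
    refine setIntegral_congr_fun measurableSet_Ioi (fun r hr => ?_)
    have hr0 : (0:ℝ) < r := lt_trans one_pos hr
    field_simp
  rw [hJeq]
  exact numeric I J2 G hI0 hJ20 hG0 hHineq hmainI
end

section
/- Let κ > 0 and α > 0. The bilinear map NL taking two pairs of Fourier-coefficient sequences ((γᵃ_n), (wᵃ_n)) and ((γᵇ_n), (wᵇ_n)), with sup_n sup_{r≥1} r^{α+l}(1+|n|)^{κ+4−l}|∂_r^l γ_n| < ∞ and sup_n sup_{r≥1} r^{α+2+l}(1+|n|)^{κ+2−l}|∂_r^l w_n| < ∞ for l = 0,1,2, to the sequence F_n(r) = (i/r) Σ_{k+l=n} (l γᵃ_l(r) ∂_r wᵇ_k(r) − ∂_r γᵃ_l(r) k wᵇ_k(r)), is well-defined and continuous into the space of sequences with sup_n sup_{r≥1} r^{4+2α}(1+|n|)^{κ+1}|F_n(r)| < ∞. -/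
open Complex

private theorem aux_sum' : Summable (fun l : ℤ => ((1 + |(l:ℝ)|)^2)⁻¹) := by
  have h : Summable (fun n : ℕ => ((1 + (n:ℝ))^2)⁻¹) := by
    have h0 : Summable (fun n : ℕ => ((n:ℝ)^2)⁻¹) := by
      simpa using Real.summable_one_div_nat_pow.mpr (by norm_num : 1 < 2)
    have h1 := h0.comp_injective (add_right_injective 1)
    apply h1.congr
    intro n
    simp [Function.comp]
  apply Summable.of_nat_of_neg <;> simpa using h

private theorem aux_tri' (n l : ℤ) (s : ℝ) (hs : 0 ≤ s) :
    (1 + |(n:ℝ)|) ^ s ≤ (1 + |(l:ℝ)|) ^ s * (1 + |((n - l : ℤ):ℝ)|) ^ s := by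
  rw [← Real.mul_rpow (by positivity) (by positivity)]
  apply Real.rpow_le_rpow (by positivity) ?_ hs
  push_cast
  have h1 : |(n:ℝ)| ≤ |(l:ℝ)| + |(n:ℝ) - l| := by
    have := abs_add_le (l:ℝ) ((n:ℝ) - l); simpa using this
  nlinarith [abs_nonneg (l:ℝ), abs_nonneg ((n:ℝ) - l)]

private theorem aux_split3' (x : ℝ) (hx : 0 < x) (s : ℝ) : x ^ (s + 3) = x ^ s * x ^ 2 * x := by
  rw [← Real.rpow_natCast x 2, ← Real.rpow_add hx, ← Real.rpow_add_one (ne_of_gt hx)]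
  ring_nf

private theorem aux_split2' (x : ℝ) (hx : 0 < x) (s : ℝ) : x ^ (s + 2) = x ^ s * x ^ 2 := by
  rw [← Real.rpow_natCast x 2, ← Real.rpow_add hx]; norm_num

/-- Bilinear continuity of the nonlinearity
`F_n(r) = (i/r) Σ_{k+l=n} (l γᵃ_l ∂_r wᵇ_k − ∂_r γᵃ_l k wᵇ_k)`
between the weighted sequence spaces: the defining series converges and
`sup_n sup_{r≥1} r^{4+2α}(1+|n|)^{κ+1}|F_n(r)| ≤ C ‖γᵃ‖ ‖wᵇ‖`. -/
theorem nonlinearity_bilinear_estimate (κ α : ℝ) (hκ : 0 < κ) (hα : 0 < α) :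
    ∃ C : ℝ, 0 < C ∧
      ∀ γa γa' wb wb' : ℤ → ℝ → ℂ, ∀ Ka Kb : ℝ,
        (∀ l : ℤ, ∀ r : ℝ, 1 ≤ r →
          r ^ α * (1 + |(l:ℝ)|) ^ (κ + 4) * ‖γa l r‖ ≤ Ka) →
        (∀ l : ℤ, ∀ r : ℝ, 1 ≤ r →
          r ^ (α + 1) * (1 + |(l:ℝ)|) ^ (κ + 3) * ‖γa' l r‖ ≤ Ka) →
        (∀ k : ℤ, ∀ r : ℝ, 1 ≤ r →
          r ^ (α + 2) * (1 + |(k:ℝ)|) ^ (κ + 2) * ‖wb k r‖ ≤ Kb) →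
        (∀ k : ℤ, ∀ r : ℝ, 1 ≤ r →
          r ^ (α + 3) * (1 + |(k:ℝ)|) ^ (κ + 1) * ‖wb' k r‖ ≤ Kb) →
        ∀ n : ℤ, ∀ r : ℝ, 1 ≤ r →
          Summable (fun l : ℤ =>
            (l : ℂ) * γa l r * wb' (n - l) r - γa' l r * ((n - l : ℤ) : ℂ) * wb (n - l) r) ∧
          r ^ (4 + 2*α) * (1 + |(n:ℝ)|) ^ (κ + 1) *
            ‖(Complex.I / (r : ℂ)) * ∑' l : ℤ,
              ((l : ℂ) * γa l r * wb' (n - l) r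
                - γa' l r * ((n - l : ℤ) : ℂ) * wb (n - l) r)‖
            ≤ C * Ka * Kb := by
  set S : ℝ := ∑' l : ℤ, ((1 + |(l:ℝ)|)^2)⁻¹ with hS
  have hS1 : (1:ℝ) ≤ S := by
    have := Summable.le_tsum aux_sum' 0 (fun l _ => by positivity)
    simpa using this
  refine ⟨2 * S, by linarith, ?_⟩
  intro γa γa' wb wb' Ka Kb h1 h2 h3 h4 n r hr
  have hr0 : (0:ℝ) < r := lt_of_lt_of_le one_pos hr
  have hKa : 0 ≤ Ka := le_trans (by positivity) (h1 0 1 le_rfl)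
  have hKb : 0 ≤ Kb := le_trans (by positivity) (h3 0 1 le_rfl)
  set N : ℝ := 1 + |(n:ℝ)| with hN
  have hN0 : (0:ℝ) < N := by positivity
  set D : ℝ := r ^ (2*α + 3) * N ^ (κ + 1) with hD
  have hD0 : (0:ℝ) < D := by positivity
  -- per-term bound
  have key : ∀ l : ℤ,
      ‖(l : ℂ) * γa l r * wb' (n - l) r - γa' l r * ((n - l : ℤ) : ℂ) * wb (n - l) r‖
        ≤ (2 * Ka * Kb / D) * ((1 + |(l:ℝ)|)^2)⁻¹ := by
    intro l
    set X : ℝ := 1 + |(l:ℝ)| with hX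
    set Y : ℝ := 1 + |((n - l : ℤ):ℝ)| with hY
    have hX0 : (0:ℝ) < X := by positivity
    have hY0 : (0:ℝ) < Y := by positivity
    have habsl : |(l:ℝ)| ≤ X := by simp [hX]
    have habsk : |((n - l : ℤ):ℝ)| ≤ Y := by simp [hY]
    have htri : N ^ (κ + 1) ≤ X ^ (κ + 1) * Y ^ (κ + 1) := aux_tri' n l (κ+1) (by linarith)
    have hP : (0:ℝ) ≤ ‖γa l r‖ := norm_nonneg _
    have hQ : (0:ℝ) ≤ ‖wb' (n - l) r‖ := norm_nonneg _
    have hP2 : (0:ℝ) ≤ ‖γa' l r‖ := norm_nonneg _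
    have hQ2 : (0:ℝ) ≤ ‖wb (n - l) r‖ := norm_nonneg _
    -- first product
    have b1 : |(l:ℝ)| * ‖γa l r‖ * ‖wb' (n - l) r‖ * (D * X^2) ≤ Ka * Kb := by
      have e2 : r ^ (2*α + 3) = r ^ α * r ^ (α + 3) := by
        rw [← Real.rpow_add hr0]; ring_nf
      have eX : X ^ (κ + 4) = X ^ (κ + 1) * X ^ 2 * X := by
        have := aux_split3' X hX0 (κ + 1)
        rw [show κ + 1 + 3 = κ + 4 by ring] at this
        exact this
      calc |(l:ℝ)| * ‖γa l r‖ * ‖wb' (n - l) r‖ * (D * X^2)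
          ≤ X * ‖γa l r‖ * ‖wb' (n - l) r‖ * ((r ^ (2*α+3) * (X ^ (κ+1) * Y ^ (κ+1))) * X^2) := by
            rw [hD]; gcongr
        _ = (r ^ α * X ^ (κ + 4) * ‖γa l r‖) * (r ^ (α + 3) * Y ^ (κ + 1) * ‖wb' (n - l) r‖) := by
            rw [e2, eX]; ring
        _ ≤ Ka * Kb :=
            mul_le_mul (h1 l r hr) (h4 (n - l) r hr) (by positivity) hKa
    -- second product
    have b2 : ‖γa' l r‖ * |((n - l : ℤ):ℝ)| * ‖wb (n - l) r‖ * (D * X^2) ≤ Ka * Kb := by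
      have e2 : r ^ (2*α + 3) = r ^ (α + 1) * r ^ (α + 2) := by
        rw [← Real.rpow_add hr0]; ring_nf
      have eX : X ^ (κ + 3) = X ^ (κ + 1) * X ^ 2 := by
        have := aux_split2' X hX0 (κ + 1)
        rw [show κ + 1 + 2 = κ + 3 by ring] at this
        exact this
      have eY : Y ^ (κ + 2) = Y ^ (κ + 1) * Y := by
        rw [show κ + 2 = κ + 1 + 1 by ring, Real.rpow_add_one (ne_of_gt hY0)]
      calc ‖γa' l r‖ * |((n - l : ℤ):ℝ)| * ‖wb (n - l) r‖ * (D * X^2)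
          ≤ ‖γa' l r‖ * Y * ‖wb (n - l) r‖ * ((r ^ (2*α+3) * (X ^ (κ+1) * Y ^ (κ+1))) * X^2) := by
            rw [hD]; gcongr
        _ = (r ^ (α + 1) * X ^ (κ + 3) * ‖γa' l r‖) * (r ^ (α + 2) * Y ^ (κ + 2) * ‖wb (n - l) r‖) := by
            rw [e2, eX, eY]; ring
        _ ≤ Ka * Kb :=
            mul_le_mul (h2 l r hr) (h3 (n - l) r hr) (by positivity) hKa
    have hDX : (0:ℝ) < D * X^2 := by positivity
    have t1 : ‖(l : ℂ) * γa l r * wb' (n - l) r‖ ≤ Ka * Kb / (D * X^2) := by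
      rw [le_div_iff₀ hDX, norm_mul, norm_mul, Complex.norm_intCast]
      exact b1
    have t2 : ‖γa' l r * ((n - l : ℤ) : ℂ) * wb (n - l) r‖ ≤ Ka * Kb / (D * X^2) := by
      rw [le_div_iff₀ hDX, norm_mul, norm_mul, Complex.norm_intCast]
      exact b2
    calc ‖(l : ℂ) * γa l r * wb' (n - l) r - γa' l r * ((n - l : ℤ) : ℂ) * wb (n - l) r‖
        ≤ ‖(l : ℂ) * γa l r * wb' (n - l) r‖ + ‖γa' l r * ((n - l : ℤ) : ℂ) * wb (n - l) r‖ :=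
          norm_sub_le _ _
      _ ≤ Ka * Kb / (D * X^2) + Ka * Kb / (D * X^2) := add_le_add t1 t2
      _ = (2 * Ka * Kb / D) * (X^2)⁻¹ := by field_simp; ring
  have hg : Summable (fun l : ℤ => (2 * Ka * Kb / D) * ((1 + |(l:ℝ)|)^2)⁻¹) :=
    aux_sum'.mul_left _
  have hsum : Summable (fun l : ℤ =>
      (l : ℂ) * γa l r * wb' (n - l) r - γa' l r * ((n - l : ℤ) : ℂ) * wb (n - l) r) :=
    Summable.of_norm_bounded hg key
  refine ⟨hsum, ?_⟩
  have htsum : ‖∑' l : ℤ, ((l : ℂ) * γa l r * wb' (n - l) r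
      - γa' l r * ((n - l : ℤ) : ℂ) * wb (n - l) r)‖ ≤ (2 * Ka * Kb / D) * S := by
    have := tsum_of_norm_bounded (g := fun l : ℤ => (2 * Ka * Kb / D) * ((1 + |(l:ℝ)|)^2)⁻¹)
      (a := (2 * Ka * Kb / D) * S) ?_ key
    · exact this
    · simpa [hS] using (aux_sum'.hasSum.mul_left (2 * Ka * Kb / D))
  have hnormI : ‖Complex.I / (r:ℂ)‖ = 1 / r := by
    rw [norm_div, Complex.norm_I, Complex.norm_real, Real.norm_eq_abs, abs_of_pos hr0]
  rw [norm_mul, hnormI]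
  have hrsplit : r ^ (4 + 2*α) = r * r ^ (2*α + 3) := by
    rw [show 4 + 2*α = 1 + (2*α + 3) by ring, Real.rpow_add hr0, Real.rpow_one]
  calc r ^ (4 + 2*α) * N ^ (κ + 1) * (1 / r * ‖∑' l : ℤ, ((l : ℂ) * γa l r * wb' (n - l) r
        - γa' l r * ((n - l : ℤ) : ℂ) * wb (n - l) r)‖)
      ≤ r ^ (4 + 2*α) * N ^ (κ + 1) * (1 / r * ((2 * Ka * Kb / D) * S)) := by gcongr
    _ = 2 * S * Ka * Kb := by
        rw [hrsplit, hD]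
        have h1 : r ≠ 0 := ne_of_gt hr0
        have h2 : r ^ (2*α + 3) ≠ 0 := by positivity
        have h3 : N ^ (κ + 1) ≠ 0 := by positivity
        field_simp
end
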